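/- Let Y, B, C ∈ ℝ² with all angles of triangle YBC less than 2π/3 and let T be its Fermat–Torricelli point. Then any compact connected set S ⊂ ℝ² containing Y, B and C satisfies H¹(S) ≥ |TY| + |TB| + |TC|; i.e., the regular tripod [TY] ∪ [TB] ∪ [TC] is a Steiner tree for {Y, B, C}. -/

import Mathlib

open Real EuclideanGeometry MeasureTheory Set Metric
open scoped NNReal ENNReal RealInnerProductSpace

section Lemmas

variable {E : Type*}

/-- `H¹` of a connected set is at least the distance between any two of its points. -/
lemma h1_ge_dist [MetricSpace E] [MeasurableSpace E] [BorelSpace E]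
    {A : Set E} (hA : IsPreconnected A) {x y : E}
    (hx : x ∈ A) (hy : y ∈ A) : ENNReal.ofReal (dist x y) ≤ μH[1] A := by
  have hlip : LipschitzWith 1 (fun z : E => dist z x) := LipschitzWith.dist_left x
  have h1 := hlip.hausdorffMeasure_image_le (le_of_lt one_pos) A
  have himg : IsPreconnected ((fun z : E => dist z x) '' A) :=
    hA.image _ (hlip.continuous.continuousOn)
  have hIcc : Icc (0:ℝ) (dist y x) ⊆ (fun z : E => dist z x) '' A := by
    have h0 : (0:ℝ) ∈ (fun z : E => dist z x) '' A := ⟨x, hx, by simp⟩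
    have hd : dist y x ∈ (fun z : E => dist z x) '' A := ⟨y, hy, rfl⟩
    exact himg.Icc_subset h0 hd
  have hmono := measure_mono hIcc (μ := μH[1])
  calc ENNReal.ofReal (dist x y) = μH[1] (Icc (0:ℝ) (dist y x)) := by
        rw [hausdorffMeasure_real, Real.volume_Icc, sub_zero, dist_comm]
    _ ≤ μH[1] ((fun z : E => dist z x) '' A) := hmono
    _ ≤ μH[1] A := by simpa using h1

/-- Connected components of closed sets are closed. -/
lemma isClosed_CCIn [MetricSpace E] {F : Set E} (hF : IsClosed F) (x : E) :
    IsClosed (connectedComponentIn F x) := by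
  by_cases hx : x ∈ F
  · have h1 : closure (connectedComponentIn F x) ⊆ connectedComponentIn F x :=
      (isPreconnected_connectedComponentIn.closure).subset_connectedComponentIn
        (subset_closure (mem_connectedComponentIn hx))
        (hF.closure_subset_iff.mpr (connectedComponentIn_subset F x))
    exact isClosed_of_closure_subset h1
  · rw [connectedComponentIn_eq_empty hx]; exact isClosed_empty

/-- Boundary bumping: in a compact connected set `K`, the connected component of a point
`x` of a proper closed subset `F` meets the closure of `K \ F`. -/
lemma boundary_bumping [MetricSpace E] {K F : Set E} (hK : IsCompact K)
    (hKconn : IsPreconnected K)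
    (hF : IsClosed F) (hFK : F ⊆ K) (hne : (K \ F).Nonempty) {x : E} (hx : x ∈ F) :
    ∃ q ∈ connectedComponentIn F x, q ∈ closure (K \ F) := by
  by_contra hcon
  push_neg at hcon
  have hFcpt : IsCompact F := hK.of_isClosed_subset hF hFK
  haveI : CompactSpace F := isCompact_iff_compactSpace.mp hFcpt
  set x' : F := ⟨x, hx⟩ with hx'
  have hCC : connectedComponentIn F x = Subtype.val '' connectedComponent x' :=
    connectedComponentIn_eq_image hx
  set E' : Set F := Subtype.val ⁻¹' (closure (K \ F)) with hE'
  have hE'closed : IsClosed E' := isClosed_closure.preimage continuous_subtype_val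
  have hE'cpt : IsCompact E' := hE'closed.isCompact
  have hdisj : ∀ z : F, z ∈ connectedComponent x' → z ∉ E' := by
    intro z hz hzE
    exact hcon z.1 (hCC ▸ ⟨z, hz, rfl⟩) hzE
  have hiInter := connectedComponent_eq_iInter_isClopen x'
  have hcover : E' ⊆ ⋃ Z : {Z : Set F // IsClopen Z ∧ x' ∈ Z}, (↑Z : Set F)ᶜ := by
    intro z hz
    by_contra hzn
    simp only [mem_iUnion, mem_compl_iff, not_exists, not_not] at hzn
    have : z ∈ connectedComponent x' := by
      rw [hiInter]; exact mem_iInter.mpr fun Z => hzn Z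
    exact hdisj z this hz
  obtain ⟨t, ht⟩ := hE'cpt.elim_finite_subcover _
    (fun Z : {Z : Set F // IsClopen Z ∧ x' ∈ Z} => Z.2.1.isClosed.isOpen_compl) hcover
  set D : Set F := ⋂ Z ∈ t, (↑Z : Set F) with hD
  have hDclopen : IsClopen D := isClopen_biInter_finset fun Z _ => Z.2.1
  have hxD : x' ∈ D := mem_iInter₂.mpr fun Z _ => Z.2.2
  have hDE' : ∀ z ∈ D, z ∉ E' := by
    intro z hzD hzE
    obtain ⟨Z, hZt, hzZ⟩ := mem_iUnion₂.mp (ht hzE)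
    exact hzZ (mem_iInter₂.mp hzD Z hZt)
  obtain ⟨U, hUopen, hDU⟩ := isOpen_induced_iff.mp hDclopen.isOpen
  set D' : Set E := Subtype.val '' D with hD'
  have hD'F : D' ⊆ F := by rintro _ ⟨w, _, rfl⟩; exact w.2
  have hD'cpt : IsCompact D' :=
    (hDclopen.isClosed.isCompact).image continuous_subtype_val
  have hD'closed : IsClosed D' := hD'cpt.isClosed
  have hD'nc : ∀ z ∈ D', z ∉ closure (K \ F) := by
    rintro _ ⟨w, hw, rfl⟩ hz
    exact hDE' w hw hz
  have hD'U : D' ⊆ U := by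
    rintro _ ⟨w, hw, rfl⟩
    rw [← hDU] at hw; exact hw
  set W₁ : Set E := U ∩ (closure (K \ F))ᶜ with hW₁
  set W₂ : Set E := D'ᶜ with hW₂
  have hW₁open : IsOpen W₁ := hUopen.inter isClosed_closure.isOpen_compl
  have hW₂open : IsOpen W₂ := hD'closed.isOpen_compl
  have hKW₁sub : K ∩ W₁ ⊆ D' := by
    rintro z ⟨hzK, hzU, hznc⟩
    have hzF : z ∈ F := by
      by_contra hzF
      exact hznc (subset_closure ⟨hzK, hzF⟩)
    refine ⟨⟨z, hzF⟩, ?_, rfl⟩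
    rw [← hDU]; exact hzU
  have hcoverK : K ⊆ W₁ ∪ W₂ := by
    intro z hzK
    by_cases hzD : z ∈ D'
    · exact Or.inl ⟨hD'U hzD, fun hc => hD'nc z hzD hc⟩
    · exact Or.inr hzD
  have hne₁ : (K ∩ W₁).Nonempty := by
    have hxD' : x ∈ D' := ⟨x', hxD, rfl⟩
    exact ⟨x, hFK hx, hD'U hxD', fun hc => hD'nc x hxD' hc⟩
  have hne₂ : (K ∩ W₂).Nonempty := by
    obtain ⟨y, hyK, hyF⟩ := hne
    exact ⟨y, hyK, fun hyD => hyF (hD'F hyD)⟩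
  obtain ⟨z, hzK, hzW₁, hzW₂⟩ := hKconn W₁ W₂ hW₁open hW₂open hcoverK hne₁ hne₂
  exact hzW₂ (hKW₁sub ⟨hzK, hzW₁⟩)

/-- The intersection of a chain of continua is connected. -/
lemma isPreconnected_sInter_chain [MetricSpace E] {c : Set (Set E)}
    (hchain : IsChain (· ⊆ ·) c)
    (hne : c.Nonempty) (hcpt : ∀ K ∈ c, IsCompact K) (hconn : ∀ K ∈ c, IsPreconnected K) :
    IsPreconnected (⋂₀ c) := by
  obtain ⟨K₀, hK₀⟩ := hne
  set A := ⋂₀ c with hA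
  have hAclosed : IsClosed A := isClosed_sInter (fun K hK => (hcpt K hK).isClosed)
  have hAcpt : IsCompact A :=
    (hcpt K₀ hK₀).of_isClosed_subset hAclosed (sInter_subset_of_mem hK₀)
  have hdir : DirectedOn (· ⊇ ·) c := by
    intro a ha b hb
    rcases hchain.total ha hb with h | h
    · exact ⟨a, ha, Subset.rfl, h⟩
    · exact ⟨b, hb, h, Subset.rfl⟩
  rw [isPreconnected_iff_subset_of_fully_disjoint_closed hAclosed]
  intro u v hu hv hcover hdisj
  by_contra hnc
  push_neg at hnc
  obtain ⟨hnu, hnv⟩ := hnc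
  have hA₁cpt : IsCompact (A ∩ u) := hAcpt.inter_right hu
  have hA₂cpt : IsCompact (A ∩ v) := hAcpt.inter_right hv
  have hne₁ : (A ∩ u).Nonempty := by
    obtain ⟨z, hzA, hznv⟩ := not_subset.mp hnv
    rcases hcover hzA with h | h
    · exact ⟨z, hzA, h⟩
    · exact absurd h hznv
  have hne₂ : (A ∩ v).Nonempty := by
    obtain ⟨z, hzA, hznu⟩ := not_subset.mp hnu
    rcases hcover hzA with h | h
    · exact absurd h hznu
    · exact ⟨z, hzA, h⟩
  have hdisj' : Disjoint (A ∩ u) (A ∩ v) :=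
    Disjoint.mono inter_subset_right inter_subset_right hdisj
  obtain ⟨U, V, hUopen, hVopen, hAU, hAV, hUV⟩ :=
    SeparatedNhds.of_isCompact_isCompact hA₁cpt hA₂cpt hdisj'
  have hmem : ∃ K ∈ c, K ⊆ U ∪ V := by
    by_contra hno
    push_neg at hno
    set c' := (fun K => K \ (U ∪ V)) '' c with hc'
    haveI : Nonempty c' := ⟨⟨K₀ \ (U ∪ V), mem_image_of_mem _ hK₀⟩⟩
    have hc'ne : (⋂₀ c').Nonempty := by
      apply IsCompact.nonempty_sInter_of_directed_nonempty_isCompact_isClosed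
      · rintro _ ⟨a, ha, rfl⟩ _ ⟨b, hb, rfl⟩
        obtain ⟨z, hz, hza, hzb⟩ := hdir a ha b hb
        exact ⟨z \ (U ∪ V), mem_image_of_mem _ hz, diff_subset_diff_left hza,
          diff_subset_diff_left hzb⟩
      · rintro _ ⟨a, ha, rfl⟩
        obtain ⟨z, hz, hnz⟩ := not_subset.mp (hno a ha)
        exact ⟨z, hz, hnz⟩
      · rintro _ ⟨a, ha, rfl⟩
        exact (hcpt a ha).diff (hUopen.union hVopen)
      · rintro _ ⟨a, ha, rfl⟩
        exact ((hcpt a ha).isClosed).sdiff (hUopen.union hVopen)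
    obtain ⟨z, hz⟩ := hc'ne
    have hzA : z ∈ A := by
      intro K hK
      exact (hz _ (mem_image_of_mem _ hK)).1
    have hznUV : z ∉ U ∪ V := (hz _ (mem_image_of_mem _ hK₀)).2
    rcases hcover hzA with h | h
    · exact hznUV (Or.inl (hAU ⟨hzA, h⟩))
    · exact hznUV (Or.inr (hAV ⟨hzA, h⟩))
  obtain ⟨K, hKc, hKUV⟩ := hmem
  have h1 : (K ∩ U).Nonempty := hne₁.mono (fun z hz => ⟨sInter_subset_of_mem hKc hz.1, hAU hz⟩)
  have h2 : (K ∩ V).Nonempty := hne₂.mono (fun z hz => ⟨sInter_subset_of_mem hKc hz.1, hAV hz⟩)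
  obtain ⟨z, _, hzU, hzV⟩ := hconn K hKc U V hUopen hVopen hKUV h1 h2
  exact (hUV.le_bot ⟨hzU, hzV⟩ : z ∈ (⊥ : Set E))

/-- The Fermat point property: if `T` sees the three points pairwise at angles whose
cosines give these inner products, then `T` minimizes the sum of distances. -/
lemma fermat_point_bound [NormedAddCommGroup E] [InnerProductSpace ℝ E] {Y B C T : E}
    (h12 : ⟪Y - T, B - T⟫ = -(1/2) * (‖Y - T‖ * ‖B - T‖))
    (h23 : ⟪B - T, C - T⟫ = -(1/2) * (‖B - T‖ * ‖C - T‖))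
    (h31 : ⟪C - T, Y - T⟫ = -(1/2) * (‖C - T‖ * ‖Y - T‖))
    (hY : Y ≠ T) (hB : B ≠ T) (hC : C ≠ T) (p : E) :
    dist T Y + dist T B + dist T C ≤ dist p Y + dist p B + dist p C := by
  set a := ‖Y - T‖ with hadef
  set b := ‖B - T‖ with hbdef
  set c := ‖C - T‖ with hcdef
  have ha : 0 < a := by rwa [hadef, norm_pos_iff, sub_ne_zero]
  have hb : 0 < b := by rwa [hbdef, norm_pos_iff, sub_ne_zero]
  have hc : 0 < c := by rwa [hcdef, norm_pos_iff, sub_ne_zero]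
  set u₁ := a⁻¹ • (Y - T) with hu₁
  set u₂ := b⁻¹ • (B - T) with hu₂
  set u₃ := c⁻¹ • (C - T) with hu₃
  have hn₁ : ⟪u₁, u₁⟫ = 1 := by
    rw [hu₁, real_inner_smul_left, real_inner_smul_right, real_inner_self_eq_norm_mul_norm]
    field_simp
    rw [hadef]
  have hn₂ : ⟪u₂, u₂⟫ = 1 := by
    rw [hu₂, real_inner_smul_left, real_inner_smul_right, real_inner_self_eq_norm_mul_norm]
    field_simp
    rw [hbdef]
  have hn₃ : ⟪u₃, u₃⟫ = 1 := by
    rw [hu₃, real_inner_smul_left, real_inner_smul_right, real_inner_self_eq_norm_mul_norm]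
    field_simp
    rw [hcdef]
  have hi₁₂ : ⟪u₁, u₂⟫ = -(1/2) := by
    rw [hu₁, hu₂, real_inner_smul_left, real_inner_smul_right, h12]
    field_simp
  have hi₂₃ : ⟪u₂, u₃⟫ = -(1/2) := by
    rw [hu₂, hu₃, real_inner_smul_left, real_inner_smul_right, h23]
    field_simp
  have hi₃₁ : ⟪u₃, u₁⟫ = -(1/2) := by
    rw [hu₃, hu₁, real_inner_smul_left, real_inner_smul_right, h31]
    field_simp
  have hsum : u₁ + u₂ + u₃ = 0 := by
    have h0 : ⟪u₁ + u₂ + u₃, u₁ + u₂ + u₃⟫ = 0 := by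
      have c21 : ⟪u₂, u₁⟫ = -(1/2) := by rw [real_inner_comm]; exact hi₁₂
      have c32 : ⟪u₃, u₂⟫ = -(1/2) := by rw [real_inner_comm]; exact hi₂₃
      have c13 : ⟪u₁, u₃⟫ = -(1/2) := by rw [real_inner_comm]; exact hi₃₁
      simp only [inner_add_left, inner_add_right]
      rw [hn₁, hn₂, hn₃]
      rw [show ⟪u₁, u₂⟫ = -(1/2) from hi₁₂, show ⟪u₂, u₃⟫ = -(1/2) from hi₂₃,
        show ⟪u₃, u₁⟫ = -(1/2) from hi₃₁, c21, c32, c13]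
      ring
    exact inner_self_eq_zero.mp h0
  have key : ∀ (V : E) (r : ℝ), 0 < r → r = ‖V - T‖ →
      r - ⟪r⁻¹ • (V - T), p - T⟫ ≤ dist p V := by
    intro V r hr hV
    have hcs := real_inner_le_norm (r⁻¹ • (V - T)) (V - p)
    have hnu : ‖r⁻¹ • (V - T)‖ = 1 := by
      rw [norm_smul, norm_inv, Real.norm_eq_abs, abs_of_pos hr, ← hV]
      field_simp
    rw [hnu, one_mul] at hcs
    have hexp : ⟪r⁻¹ • (V - T), V - p⟫ = r - ⟪r⁻¹ • (V - T), p - T⟫ := by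
      have hsp : V - p = (V - T) - (p - T) := by abel
      rw [hsp, inner_sub_right, real_inner_smul_left, real_inner_self_eq_norm_mul_norm, ← hV]
      field_simp
    rw [hexp] at hcs
    calc r - ⟪r⁻¹ • (V - T), p - T⟫ ≤ ‖V - p‖ := hcs
      _ = dist p V := by rw [dist_eq_norm, norm_sub_rev]
  have k₁ := key Y a ha hadef
  have k₂ := key B b hb hbdef
  have k₃ := key C c hc hcdef
  have hzero : ⟪u₁, p - T⟫ + ⟪u₂, p - T⟫ + ⟪u₃, p - T⟫ = 0 := by
    rw [← inner_add_left, ← inner_add_left, hsum, inner_zero_left]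
  have hd₁ : dist T Y = a := by rw [dist_comm, dist_eq_norm]
  have hd₂ : dist T B = b := by rw [dist_comm, dist_eq_norm]
  have hd₃ : dist T C = c := by rw [dist_comm, dist_eq_norm]
  rw [hd₁, hd₂, hd₃]
  rw [hu₁] at hzero; rw [hu₂] at hzero; rw [hu₃] at hzero
  linarith [k₁, k₂, k₃]

lemma inner_of_angle [NormedAddCommGroup E] [InnerProductSpace ℝ E] {u v : E}
    (h : InnerProductGeometry.angle u v = 2 * π / 3) :
    u ≠ 0 ∧ v ≠ 0 ∧ ⟪u, v⟫ = -(1/2) * (‖u‖ * ‖v‖) := by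
  have hpi := Real.pi_pos
  have hcos : Real.cos (2 * π / 3) = -(1/2) := by
    have heq : 2 * π / 3 = π - π / 3 := by ring
    rw [heq, Real.cos_pi_sub, Real.cos_pi_div_three]
  have hu : u ≠ 0 := by
    rintro rfl
    rw [InnerProductGeometry.angle_zero_left] at h
    linarith
  have hv : v ≠ 0 := by
    rintro rfl
    rw [InnerProductGeometry.angle_zero_right] at h
    linarith
  refine ⟨hu, hv, ?_⟩
  have hca := InnerProductGeometry.cos_angle u v
  rw [h, hcos] at hca
  have hnu : (0:ℝ) < ‖u‖ := norm_pos_iff.mpr hu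
  have hnv : (0:ℝ) < ‖v‖ := norm_pos_iff.mpr hv
  field_simp at hca
  linarith

lemma ofReal_limit {x1 x2 x3 : ℝ} {ε₀ : ℝ} (hε₀ : 0 < ε₀) {m : ℝ≥0∞}
    (h : ∀ ε, 0 < ε → ε < ε₀ → ENNReal.ofReal (x1 - ε) + ENNReal.ofReal (x2 - ε)
      + ENNReal.ofReal (x3 - ε) ≤ m) :
    ENNReal.ofReal (x1 + x2 + x3) ≤ m := by
  rcases eq_top_or_lt_top m with rfl | hm
  · exact le_top
  have hreal : ∀ ε, 0 < ε → ε < ε₀ → x1 + x2 + x3 - 3*ε ≤ m.toReal := by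
    intro ε hε hεε
    have h3 : ENNReal.ofReal (x1 + x2 + x3 - 3*ε) ≤ m := by
      refine le_trans ?_ (h ε hε hεε)
      have heq : x1 + x2 + x3 - 3*ε = (x1-ε) + ((x2-ε) + (x3-ε)) := by ring
      rw [heq]
      refine le_trans ENNReal.ofReal_add_le ?_
      have h2 := ENNReal.ofReal_add_le (p := x2 - ε) (q := x3 - ε)
      calc ENNReal.ofReal (x1-ε) + ENNReal.ofReal ((x2-ε) + (x3-ε))
          ≤ ENNReal.ofReal (x1-ε) + (ENNReal.ofReal (x2-ε) + ENNReal.ofReal (x3-ε)) :=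
            add_le_add_right h2 _
        _ = ENNReal.ofReal (x1-ε) + ENNReal.ofReal (x2-ε) + ENNReal.ofReal (x3-ε) := by
            rw [add_assoc]
    exact (ENNReal.ofReal_le_iff_le_toReal hm.ne).mp h3
  have hfin : x1 + x2 + x3 ≤ m.toReal := by
    by_contra hlt
    push_neg at hlt
    set δ := x1 + x2 + x3 - m.toReal with hδ
    have hδpos : 0 < δ := by linarith
    set ε := min (ε₀/2) (δ/6) with hε
    have hεpos : 0 < ε := lt_min (by linarith) (by linarith)
    have hεlt : ε < ε₀ := lt_of_le_of_lt (min_le_left _ _) (by linarith)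
    have := hreal ε hεpos hεlt
    have hεle : ε ≤ δ/6 := min_le_right _ _
    linarith
  exact ENNReal.ofReal_le_of_le_toReal hfin

/-- In a minimal continuum joining `Y` and `B`, splitting at any point `p`. -/
lemma split_bound [MetricSpace E] [MeasurableSpace E] [BorelSpace E] {S Γ : Set E} {Y B : E}
    (hmin : Minimal (fun K => K ⊆ S ∧ IsCompact K ∧ IsPreconnected K ∧ Y ∈ K ∧ B ∈ K) Γ)
    {p : E} (hp : p ∈ Γ) {ε : ℝ} (hε : 0 < ε) :
    ENNReal.ofReal (dist Y p - ε) + ENNReal.ofReal (dist B p - ε) ≤ μH[1] Γ := by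
  obtain ⟨⟨hΓS, hΓcpt, hΓconn, hYΓ, hBΓ⟩, hminimal⟩ := hmin
  by_cases h1 : dist Y p ≤ ε
  · rw [ENNReal.ofReal_eq_zero.mpr (by linarith), zero_add]
    have hd : dist B p - ε ≤ dist B Y := by
      have := dist_triangle B Y p
      linarith
    calc ENNReal.ofReal (dist B p - ε) ≤ ENNReal.ofReal (dist B Y) :=
          ENNReal.ofReal_le_ofReal hd
      _ ≤ μH[1] Γ := h1_ge_dist hΓconn hBΓ hYΓ
  by_cases h2 : dist B p ≤ ε
  · rw [ENNReal.ofReal_eq_zero.mpr (by linarith : dist B p - ε ≤ 0), add_zero]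
    have hd : dist Y p - ε ≤ dist Y B := by
      have := dist_triangle Y B p
      linarith
    calc ENNReal.ofReal (dist Y p - ε) ≤ ENNReal.ofReal (dist Y B) :=
          ENNReal.ofReal_le_ofReal hd
      _ ≤ μH[1] Γ := h1_ge_dist hΓconn hYΓ hBΓ
  push_neg at h1 h2
  set F := Γ \ ball p ε with hF
  have hFclosed : IsClosed F := hΓcpt.isClosed.inter (isOpen_ball.isClosed_compl)
  have hFK : F ⊆ Γ := diff_subset
  have hYF : Y ∈ F := ⟨hYΓ, by simp only [mem_ball, not_lt]; linarith⟩
  have hBF : B ∈ F := ⟨hBΓ, by simp only [mem_ball, not_lt]; linarith⟩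
  have hne : (Γ \ F).Nonempty := ⟨p, hp, fun hpF => hpF.2 (mem_ball_self hε)⟩
  obtain ⟨qY, hqYmem, hqYcl⟩ := boundary_bumping hΓcpt hΓconn hFclosed hFK hne hYF
  obtain ⟨qB, hqBmem, hqBcl⟩ := boundary_bumping hΓcpt hΓconn hFclosed hFK hne hBF
  have hclsub : closure (Γ \ F) ⊆ closedBall p ε := by
    refine closure_minimal ?_ Metric.isClosed_closedBall
    rintro z ⟨hzΓ, hzF⟩
    have : z ∈ ball p ε := by
      by_contra hzb
      exact hzF ⟨hzΓ, hzb⟩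
    exact ball_subset_closedBall this
  have hqYd : dist qY p ≤ ε := mem_closedBall.mp (hclsub hqYcl)
  have hqBd : dist qB p ≤ ε := mem_closedBall.mp (hclsub hqBcl)
  set CY := connectedComponentIn F Y with hCY
  set CB := connectedComponentIn F B with hCB
  have hCYclosed : IsClosed CY := isClosed_CCIn hFclosed Y
  have hCBclosed : IsClosed CB := isClosed_CCIn hFclosed B
  have hCYsub : CY ⊆ Γ := (connectedComponentIn_subset F Y).trans hFK
  have hCBsub : CB ⊆ Γ := (connectedComponentIn_subset F B).trans hFK
  have hCYcpt : IsCompact CY := hΓcpt.of_isClosed_subset hCYclosed hCYsub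
  have hCBcpt : IsCompact CB := hΓcpt.of_isClosed_subset hCBclosed hCBsub
  have hne' : CY ≠ CB := by
    intro heq
    have hBK : B ∈ CY := heq ▸ mem_connectedComponentIn hBF
    have hKP : CY ⊆ S ∧ IsCompact CY ∧ IsPreconnected CY ∧ Y ∈ CY ∧ B ∈ CY :=
      ⟨hCYsub.trans hΓS, hCYcpt, isPreconnected_connectedComponentIn,
        mem_connectedComponentIn hYF, hBK⟩
    have hΓsub := hminimal hKP hCYsub
    have hpCY : p ∈ CY := hΓsub hp
    exact ((connectedComponentIn_subset F Y) hpCY).2 (mem_ball_self hε)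
  have hdisj : Disjoint CY CB := by
    rw [Set.disjoint_left]
    intro z hzY hzB
    exact hne' ((connectedComponentIn_eq hzY).trans (connectedComponentIn_eq hzB).symm)
  have hμY : ENNReal.ofReal (dist Y p - ε) ≤ μH[1] CY := by
    have hd : dist Y p - ε ≤ dist Y qY := by
      have := dist_triangle Y qY p
      linarith
    calc ENNReal.ofReal (dist Y p - ε) ≤ ENNReal.ofReal (dist Y qY) :=
          ENNReal.ofReal_le_ofReal hd
      _ ≤ μH[1] CY := h1_ge_dist isPreconnected_connectedComponentIn
          (mem_connectedComponentIn hYF) hqYmem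
  have hμB : ENNReal.ofReal (dist B p - ε) ≤ μH[1] CB := by
    have hd : dist B p - ε ≤ dist B qB := by
      have := dist_triangle B qB p
      linarith
    calc ENNReal.ofReal (dist B p - ε) ≤ ENNReal.ofReal (dist B qB) :=
          ENNReal.ofReal_le_ofReal hd
      _ ≤ μH[1] CB := h1_ge_dist isPreconnected_connectedComponentIn
          (mem_connectedComponentIn hBF) hqBmem
  calc ENNReal.ofReal (dist Y p - ε) + ENNReal.ofReal (dist B p - ε)
      ≤ μH[1] CY + μH[1] CB := add_le_add hμY hμB
    _ = μH[1] (CY ∪ CB) := (measure_union hdisj hCBcpt.measurableSet).symm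
    _ ≤ μH[1] Γ := measure_mono (union_subset hCYsub hCBsub)

end Lemmas

/-- Any compact connected set containing the vertices of a triangle with all
angles `< 2π/3` has `H¹` measure at least the length of the regular tripod
centered at the Fermat–Torricelli point `T`. -/
theorem stmt_11 (Y B C T : EuclideanSpace ℝ (Fin 2))
    (haff : AffineIndependent ℝ ![Y, B, C])
    (hY : ∠ B Y C < 2 * Real.pi / 3) (hB : ∠ Y B C < 2 * Real.pi / 3)
    (hC : ∠ Y C B < 2 * Real.pi / 3)
    (hT1 : ∠ Y T B = 2 * Real.pi / 3) (hT2 : ∠ B T C = 2 * Real.pi / 3)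
    (hT3 : ∠ C T Y = 2 * Real.pi / 3)
    (S : Set (EuclideanSpace ℝ (Fin 2))) (hS : IsCompact S) (hconn : IsConnected S)
    (hYS : Y ∈ S) (hBS : B ∈ S) (hCS : C ∈ S) :
    ENNReal.ofReal (dist T Y + dist T B + dist T C) ≤ μH[1] S := by
  classical
  obtain ⟨hYT0, hBT0, h12⟩ := inner_of_angle
    (by simpa [EuclideanGeometry.angle, vsub_eq_sub] using hT1)
  obtain ⟨_, hCT0, h23⟩ := inner_of_angle
    (by simpa [EuclideanGeometry.angle, vsub_eq_sub] using hT2)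
  obtain ⟨_, _, h31⟩ := inner_of_angle
    (by simpa [EuclideanGeometry.angle, vsub_eq_sub] using hT3)
  have hYne : Y ≠ T := fun h => hYT0 (by rw [h, sub_self])
  have hBne : B ≠ T := fun h => hBT0 (by rw [h, sub_self])
  have hCne : C ≠ T := fun h => hCT0 (by rw [h, sub_self])
  have hfermat := fermat_point_bound h12 h23 h31 hYne hBne hCne
  -- minimal continuum joining Y and B
  set P₁ : Set (EuclideanSpace ℝ (Fin 2)) → Prop :=
    fun K => K ⊆ S ∧ IsCompact K ∧ IsPreconnected K ∧ Y ∈ K ∧ B ∈ K with hP₁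
  have hchain₁ : ∀ c ⊆ {K | P₁ K}, IsChain (· ⊆ ·) c → c.Nonempty →
      ∃ lb ∈ {K | P₁ K}, ∀ s ∈ c, lb ⊆ s := by
    intro c hc hchain hne
    obtain ⟨K₀, hK₀⟩ := hne
    refine ⟨⋂₀ c, ?_, fun s hs => sInter_subset_of_mem hs⟩
    have hK₀P := hc hK₀
    refine ⟨(sInter_subset_of_mem hK₀).trans hK₀P.1, ?_, ?_, ?_, ?_⟩
    · exact (hK₀P.2.1).of_isClosed_subset
        (isClosed_sInter fun K hK => ((hc hK).2.1).isClosed) (sInter_subset_of_mem hK₀)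
    · exact isPreconnected_sInter_chain hchain ⟨K₀, hK₀⟩ (fun K hK => (hc hK).2.1)
        (fun K hK => (hc hK).2.2.1)
    · exact mem_sInter.mpr fun K hK => (hc hK).2.2.2.1
    · exact mem_sInter.mpr fun K hK => (hc hK).2.2.2.2
  obtain ⟨Γ, hΓsubS', hΓmin⟩ := zorn_superset_nonempty {K | P₁ K} hchain₁ S
    ⟨Subset.rfl, hS, hconn.isPreconnected, hYS, hBS⟩
  obtain ⟨hΓS, hΓcpt, hΓconn, hYΓ, hBΓ⟩ := hΓmin.prop
  by_cases hCΓ : C ∈ Γ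
  · -- C lies on Γ : split at C
    have hbound : ∀ ε, 0 < ε → ε < 1 →
        ENNReal.ofReal (dist Y C - ε) + ENNReal.ofReal (dist B C - ε)
          + ENNReal.ofReal (dist C C - ε) ≤ μH[1] S := by
      intro ε hε _
      have h3 : ENNReal.ofReal (dist C C - ε) = 0 :=
        ENNReal.ofReal_eq_zero.mpr (by rw [dist_self]; linarith)
      rw [h3, add_zero]
      exact (split_bound hΓmin hCΓ hε).trans (measure_mono hΓS)
    have hlim := ofReal_limit one_pos hbound
    refine le_trans (ENNReal.ofReal_le_ofReal ?_) hlim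
    have hf := hfermat C
    have e1 : dist C Y = dist Y C := dist_comm C Y
    have e2 : dist C B = dist B C := dist_comm C B
    have e3 : dist C C = 0 := dist_self C
    linarith
  · -- C off Γ : minimal continuum joining C to Γ
    set P₂ : Set (EuclideanSpace ℝ (Fin 2)) → Prop :=
      fun K => K ⊆ S ∧ IsCompact K ∧ IsPreconnected K ∧ C ∈ K ∧ (K ∩ Γ).Nonempty with hP₂
    have hchain₂ : ∀ c ⊆ {K | P₂ K}, IsChain (· ⊆ ·) c → c.Nonempty →
        ∃ lb ∈ {K | P₂ K}, ∀ s ∈ c, lb ⊆ s := by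
      intro c hc hchain hne
      obtain ⟨K₀, hK₀⟩ := hne
      refine ⟨⋂₀ c, ?_, fun s hs => sInter_subset_of_mem hs⟩
      have hK₀P := hc hK₀
      have hdir : DirectedOn (· ⊇ ·) c := by
        intro a ha b hb
        rcases hchain.total ha hb with h | h
        · exact ⟨a, ha, Subset.rfl, h⟩
        · exact ⟨b, hb, h, Subset.rfl⟩
      refine ⟨(sInter_subset_of_mem hK₀).trans hK₀P.1, ?_, ?_, ?_, ?_⟩
      · exact (hK₀P.2.1).of_isClosed_subset
          (isClosed_sInter fun K hK => ((hc hK).2.1).isClosed) (sInter_subset_of_mem hK₀)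
      · exact isPreconnected_sInter_chain hchain ⟨K₀, hK₀⟩ (fun K hK => (hc hK).2.1)
          (fun K hK => (hc hK).2.2.1)
      · exact mem_sInter.mpr fun K hK => (hc hK).2.2.2.1
      · -- nonempty intersection with Γ
        set c' := (fun K => K ∩ Γ) '' c with hc'
        haveI : Nonempty c' := ⟨⟨K₀ ∩ Γ, mem_image_of_mem _ hK₀⟩⟩
        have hc'ne : (⋂₀ c').Nonempty := by
          apply IsCompact.nonempty_sInter_of_directed_nonempty_isCompact_isClosed
          · rintro _ ⟨a, ha, rfl⟩ _ ⟨b, hb, rfl⟩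
            obtain ⟨z, hz, hza, hzb⟩ := hdir a ha b hb
            exact ⟨z ∩ Γ, mem_image_of_mem _ hz, inter_subset_inter_left _ hza,
              inter_subset_inter_left _ hzb⟩
          · rintro _ ⟨a, ha, rfl⟩
            exact (hc ha).2.2.2.2
          · rintro _ ⟨a, ha, rfl⟩
            exact ((hc ha).2.1).inter_right hΓcpt.isClosed
          · rintro _ ⟨a, ha, rfl⟩
            exact (((hc ha).2.1).isClosed).inter hΓcpt.isClosed
        obtain ⟨z, hz⟩ := hc'ne
        refine ⟨z, ?_, (hz _ (mem_image_of_mem _ hK₀)).2⟩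
        intro K hK
        exact (hz _ (mem_image_of_mem _ hK)).1
    obtain ⟨Δ, hΔsubS', hΔmin⟩ := zorn_superset_nonempty {K | P₂ K} hchain₂ S
      ⟨Subset.rfl, hS, hconn.isPreconnected, hCS, ⟨Y, hYS, hYΓ⟩⟩
    obtain ⟨hΔS, hΔcpt, hΔconn, hCΔ, hΔΓ⟩ := hΔmin.prop
    obtain ⟨p, hpΔ, hpΓ⟩ := hΔΓ
    have hCp : 0 < dist C p := dist_pos.mpr (fun h => hCΓ (h ▸ hpΓ))
    have hbound : ∀ ε, 0 < ε → ε < dist C p →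
        ENNReal.ofReal (dist Y p - ε) + ENNReal.ofReal (dist B p - ε)
          + ENNReal.ofReal (dist C p - ε) ≤ μH[1] S := by
      intro ε hε hεlt
      have hsplit := split_bound hΓmin hpΓ hε
      -- the branch from C
      set F' := Δ \ ball p ε with hF'
      have hF'closed : IsClosed F' := hΔcpt.isClosed.inter (isOpen_ball.isClosed_compl)
      have hCF' : C ∈ F' := ⟨hCΔ, by simp only [mem_ball, not_lt]; linarith⟩
      have hne' : (Δ \ F').Nonempty := ⟨p, hpΔ, fun h => h.2 (mem_ball_self hε)⟩
      obtain ⟨q, hqmem, hqcl⟩ := boundary_bumping hΔcpt hΔconn hF'closed diff_subset hne' hCF'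
      have hclsub : closure (Δ \ F') ⊆ closedBall p ε := by
        refine closure_minimal ?_ Metric.isClosed_closedBall
        rintro z ⟨hzΔ, hzF⟩
        have : z ∈ ball p ε := by
          by_contra hzb
          exact hzF ⟨hzΔ, hzb⟩
        exact ball_subset_closedBall this
      have hqd : dist q p ≤ ε := mem_closedBall.mp (hclsub hqcl)
      set D := connectedComponentIn F' C with hD
      have hDclosed : IsClosed D := isClosed_CCIn hF'closed C
      have hDsub : D ⊆ Δ := (connectedComponentIn_subset F' C).trans diff_subset
      have hDcpt : IsCompact D := hΔcpt.of_isClosed_subset hDclosed hDsub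
      have hDΓ : D ∩ Γ = ∅ := by
        by_contra hne''
        have hne''' : (D ∩ Γ).Nonempty := nonempty_iff_ne_empty.mpr hne''
        have hKP : P₂ D := ⟨hDsub.trans hΔS, hDcpt, isPreconnected_connectedComponentIn,
          mem_connectedComponentIn hCF', hne'''⟩
        have hΔsub := hΔmin.2 hKP hDsub
        have hpD : p ∈ D := hΔsub hpΔ
        exact ((connectedComponentIn_subset F' C) hpD).2 (mem_ball_self hε)
      have hμD : ENNReal.ofReal (dist C p - ε) ≤ μH[1] D := by
        have hd : dist C p - ε ≤ dist C q := by
          have := dist_triangle C q p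
          linarith
        calc ENNReal.ofReal (dist C p - ε) ≤ ENNReal.ofReal (dist C q) :=
              ENNReal.ofReal_le_ofReal hd
          _ ≤ μH[1] D := h1_ge_dist isPreconnected_connectedComponentIn
              (mem_connectedComponentIn hCF') hqmem
      have hdisjDΓ : Disjoint Γ D := by
        rw [Set.disjoint_right]
        intro z hzD hzΓ
        exact (eq_empty_iff_forall_notMem.mp hDΓ z) ⟨hzD, hzΓ⟩
      calc ENNReal.ofReal (dist Y p - ε) + ENNReal.ofReal (dist B p - ε)
            + ENNReal.ofReal (dist C p - ε)
          ≤ μH[1] Γ + μH[1] D := add_le_add hsplit hμD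
        _ = μH[1] (Γ ∪ D) := (measure_union hdisjDΓ hDcpt.measurableSet).symm
        _ ≤ μH[1] S := measure_mono (union_subset hΓS (hDsub.trans hΔS))
    have hlim := ofReal_limit hCp hbound
    refine le_trans (ENNReal.ofReal_le_ofReal ?_) hlim
    have hf := hfermat p
    have e1 : dist p Y = dist Y p := dist_comm p Y
    have e2 : dist p B = dist B p := dist_comm p B
    have e3 : dist p C = dist C p := dist_comm p C
    linarith
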